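/- Let M be a torsion-free Z^n-graded module over the polynomial ring R = K[x_1,...,x_n], minimally generated by homogeneous elements y_1, ..., y_s whose multidegrees lie in Z^n_{≥0} and all have t-th coordinate equal to 0, for some fixed index t. Then for every i and every a ∈ Z^n with b_{i,a}(M) ≠ 0 (the multigraded Betti numbers of M), the t-th coordinate of a is 0. -/

import Mathlib

noncomputable def kd (K : Type) [Field K] (N : ℕ) (M : Type) [AddCommGroup M]
    [Module (MvPolynomial (Fin N) K) M] :
    (Finset (Fin N) → M) →ₗ[MvPolynomial (Fin N) K] (Finset (Fin N) → M) where
  toFun z s := ∑ j ∈ sᶜ, ((-1 : ℤ) ^ ((s.filter (· < j)).card)) •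
      ((MvPolynomial.X j : MvPolynomial (Fin N) K) • z (insert j s))
  map_add' x y := by
    funext s
    try dsimp only
    simp only [Pi.add_apply, smul_add, Finset.sum_add_distrib]
  map_smul' r x := by
    funext s
    try dsimp only
    simp only [Pi.smul_apply, RingHom.id_apply, Finset.smul_sum]
    exact Finset.sum_congr rfl fun j _ => by
      rw [smul_comm r ((-1 : ℤ) ^ ((s.filter (· < j)).card)), smul_comm r (MvPolynomial.X j : MvPolynomial (Fin N) K)]

noncomputable def ZB (K : Type) [Field K] (N : ℕ) (M : Type) [AddCommGroup M]
    [Module (MvPolynomial (Fin N) K) M] : Submodule (MvPolynomial (Fin N) K) (Finset (Fin N) → M) :=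
  LinearMap.ker (kd K N M)

noncomputable def Bd (K : Type) [Field K] (N : ℕ) (M : Type) [AddCommGroup M]
    [Module (MvPolynomial (Fin N) K) M] : Submodule (MvPolynomial (Fin N) K) (Finset (Fin N) → M) :=
  LinearMap.range (kd K N M)

@[reducible] def Hmod (K : Type) [Field K] (N : ℕ) (M : Type) [AddCommGroup M]
    [Module (MvPolynomial (Fin N) K) M] :=
  (ZB K N M) ⧸ (Submodule.comap (ZB K N M).subtype (Bd K N M))

open scoped Classical in
noncomputable def classOf (K : Type) [Field K] (N : ℕ) (M : Type) [AddCommGroup M]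
    [Module (MvPolynomial (Fin N) K) M] (z : Finset (Fin N) → M) : Hmod K N M :=
  if h : z ∈ ZB K N M then Submodule.Quotient.mk ⟨z, h⟩ else 0




/-! ### Auxiliary lemmas for `stmt8` -/

section Stmt8Aux
open MvPolynomial
variable (K : Type) [Field K] (N : ℕ) (M : Type) [AddCommGroup M]
    [Module (MvPolynomial (Fin N) K) M] [Module K M]
    [IsScalarTower K (MvPolynomial (Fin N) K) M]
    (ℳ : (Fin N → ℤ) → Submodule K M)

set_option linter.unusedSectionVars false
set_option linter.unnecessarySeqFocus false

lemma aux_comm (c : K) (p : MvPolynomial (Fin N) K) (m : M) :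
    p • (c • m) = c • (p • m) := by
  rw [← algebraMap_smul (MvPolynomial (Fin N) K) c m, ← mul_smul, mul_comm,
    mul_smul, algebraMap_smul]

variable (hgr : ∀ (α : Fin N → ℤ) (j : Fin N), ∀ x ∈ ℳ α,
      (MvPolynomial.X j : MvPolynomial (Fin N) K) • x ∈ ℳ (α + Pi.single j 1))

include hgr in
lemma aux_pow_mem (j : Fin N) (b : ℕ) (α : Fin N → ℤ) (x : M) (hx : x ∈ ℳ α) :
    ((MvPolynomial.X j : MvPolynomial (Fin N) K) ^ b) • x
      ∈ ℳ (α + fun k => if k = j then (b : ℤ) else 0) := by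
  induction b with
  | zero =>
      have : (MvPolynomial.X j : MvPolynomial (Fin N) K) ^ 0 • x = x := by
        rw [pow_zero, one_smul]
      rw [this]
      convert hx using 2
      funext k; simp
  | succ b ih =>
      have h2 := hgr _ j _ ih
      rw [pow_succ, mul_comm, mul_smul]
      convert h2 using 2
      funext k
      by_cases hk : k = j <;> simp [hk, Pi.single_apply] <;> ring

include hgr in
lemma aux_mono_mem (β : Fin N →₀ ℕ) (α : Fin N → ℤ) (x : M) (hx : x ∈ ℳ α) :
    (MvPolynomial.monomial β (1 : K)) • x ∈ ℳ (α + fun k => ((β k : ℕ) : ℤ)) := by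
  induction β using Finsupp.induction generalizing α x with
  | zero =>
      have : (MvPolynomial.monomial (0 : Fin N →₀ ℕ) (1 : K)) • x = x := by
        rw [monomial_zero', C_1, one_smul]
      rw [this]
      convert hx using 2
      funext k; simp
  | single_add a b f ha hb ih =>
      have h1 : (MvPolynomial.monomial (Finsupp.single a b + f) (1 : K))
          = (MvPolynomial.X a : MvPolynomial (Fin N) K) ^ b * MvPolynomial.monomial f 1 := by
        rw [X_pow_eq_monomial, monomial_mul, one_mul]
      rw [h1, mul_smul]
      have h2 := aux_pow_mem K N M ℳ hgr a b _ _ (ih _ _ hx)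
      convert h2 using 2
      funext k
      by_cases hk : k = a <;>
        simp [hk, Finsupp.single_apply, Ne.symm, eq_comm] <;> ring


omit hgr

variable {s : ℕ} (y : Fin s → M)

/-- The set of `monomial • generator` elements. -/
def genSet : Set M := {x : M | ∃ i, ∃ β : Fin N →₀ ℕ, x = (MvPolynomial.monomial β (1 : K)) • y i}

lemma aux_mono_closed (β : Fin N →₀ ℕ) (m : M) (hm : m ∈ Submodule.span K (genSet K N M y)) :
    (MvPolynomial.monomial β (1 : K)) • m ∈ Submodule.span K (genSet K N M y) := by
  induction hm using Submodule.span_induction with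
  | mem x hx =>
      obtain ⟨i, β', rfl⟩ := hx
      refine Submodule.subset_span ⟨i, β + β', ?_⟩
      rw [← mul_smul, monomial_mul, one_mul]
  | zero => rw [smul_zero]; exact Submodule.zero_mem _
  | add x z hx hz ihx ihz => rw [smul_add]; exact Submodule.add_mem _ ihx ihz
  | smul c x hx ih => rw [aux_comm K N M]; exact Submodule.smul_mem _ c ih

lemma aux_r_closed (r : MvPolynomial (Fin N) K) (m : M)
    (hm : m ∈ Submodule.span K (genSet K N M y)) :
    r • m ∈ Submodule.span K (genSet K N M y) := by
  rw [show r • m = ∑ v ∈ r.support, (MvPolynomial.monomial v (coeff v r)) • m by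
    rw [← Finset.sum_smul, ← as_sum r]]
  refine Submodule.sum_mem _ fun v hv => ?_
  have h1 : (MvPolynomial.monomial v (coeff v r)) • m
      = (coeff v r) • ((MvPolynomial.monomial v (1:K)) • m) := by
    rw [← smul_assoc]
    congr 1
    rw [smul_monomial, smul_eq_mul, mul_one]
  rw [h1]
  exact Submodule.smul_mem _ _ (aux_mono_closed K N M y v m hm)

lemma aux_span (hgen : Submodule.span (MvPolynomial (Fin N) K) (Set.range y) = ⊤) (m : M) :
    m ∈ Submodule.span K (genSet K N M y) := by
  have hm : m ∈ Submodule.span (MvPolynomial (Fin N) K) (Set.range y) := by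
    rw [hgen]; trivial
  induction hm using Submodule.span_induction with
  | mem x hx =>
      obtain ⟨i, rfl⟩ := hx
      refine Submodule.subset_span ⟨i, 0, ?_⟩
      rw [monomial_zero', C_1, one_smul]
  | zero => exact Submodule.zero_mem _
  | add x z hx hz ihx ihz => exact Submodule.add_mem _ ihx ihz
  | smul r x hx ih => exact aux_r_closed K N M y r x ih


/-- The multiplication-by-`X t` map as a `K`-linear map. -/
noncomputable def muX (t : Fin N) : M →ₗ[K] M where
  toFun x := (MvPolynomial.X t : MvPolynomial (Fin N) K) • x
  map_add' x z := smul_add _ x z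
  map_smul' c x := aux_comm K N M c _ x

@[simp] lemma muX_apply (t : Fin N) (x : M) :
    muX K N M t x = (MvPolynomial.X t : MvPolynomial (Fin N) K) • x := rfl

lemma aux_key (hdecomp : DirectSum.IsInternal ℳ)
    (hgr : ∀ (α : Fin N → ℤ) (j : Fin N), ∀ x ∈ ℳ α,
      (MvPolynomial.X j : MvPolynomial (Fin N) K) • x ∈ ℳ (α + Pi.single j 1))
    (dy : Fin s → Fin N → ℤ) (t : Fin N)
    (hy : ∀ i, y i ∈ ℳ (dy i)) (ht : ∀ i, dy i t = 0)
    (hgen : Submodule.span (MvPolynomial (Fin N) K) (Set.range y) = ⊤)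
    (γ : Fin N → ℤ) (m : M) (hm : m ∈ ℳ γ) :
    (γ t < 0 → m = 0) ∧
    (1 ≤ γ t → ∃ m', m' ∈ ℳ (γ - Pi.single t 1) ∧
      m = (MvPolynomial.X t : MvPolynomial (Fin N) K) • m') := by
  haveI := hdecomp.chooseDecomposition
  have hsame : (DirectSum.decompose ℳ m γ : M) = m := DirectSum.decompose_of_mem_same ℳ hm
  -- degrees of generators
  have hgendeg : ∀ i (β : Fin N →₀ ℕ),
      (MvPolynomial.monomial β (1 : K)) • y i ∈ ℳ (dy i + fun k => ((β k : ℕ) : ℤ)) :=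
    fun i β => aux_mono_mem K N M ℳ hgr β _ _ (hy i)
  constructor
  · -- negative degree: m = 0
    intro hneg
    have key : ∀ x ∈ Submodule.span K (genSet K N M y),
        (DirectSum.decompose ℳ x γ : M) = 0 := by
      intro x hx
      induction hx using Submodule.span_induction with
      | mem x hx =>
          obtain ⟨i, β, rfl⟩ := hx
          refine DirectSum.decompose_of_mem_ne ℳ (hgendeg i β) ?_
          intro hEq
          have : (dy i + fun k => ((β k : ℕ) : ℤ)) t = γ t := by rw [hEq]
          simp only [Pi.add_apply, ht i, zero_add] at this
          omega
      | zero => rw [DirectSum.decompose_zero]; rfl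
      | add x z hx hz ihx ihz =>
          rw [DirectSum.decompose_add, DirectSum.add_apply, Submodule.coe_add, ihx, ihz, add_zero]
      | smul c x hx ih =>
          rw [DirectSum.decompose_smul, DirectSum.smul_apply, Submodule.coe_smul, ih, smul_zero]
    rw [← hsame, key m (aux_span K N M y hgen m)]
  · -- positive t-degree: divisible by X t
    intro hpos
    set V : Submodule K M := Submodule.map (muX K N M t) (ℳ (γ - Pi.single t 1)) with hV
    have key : ∀ x ∈ Submodule.span K (genSet K N M y),
        (DirectSum.decompose ℳ x γ : M) ∈ V := by
      intro x hx
      induction hx using Submodule.span_induction with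
      | mem x hx =>
          obtain ⟨i, β, rfl⟩ := hx
          by_cases hEq : (dy i + fun k => ((β k : ℕ) : ℤ)) = γ
          · rw [DirectSum.decompose_of_mem_same ℳ (hEq ▸ hgendeg i β)]
            -- show the generator is divisible by X t
            have hβt : 1 ≤ β t := by
              have : (dy i + fun k => ((β k : ℕ) : ℤ)) t = γ t := by rw [hEq]
              simp only [Pi.add_apply, ht i, zero_add] at this
              omega
            have hβ : Finsupp.single t 1 + (β - Finsupp.single t 1) = β := by
              ext k
              rcases eq_or_ne k t with rfl | hk
              · simp only [Finsupp.add_apply, Finsupp.tsub_apply, Finsupp.single_eq_same]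
                omega
              · simp [Finsupp.single_apply, Ne.symm hk]
            have hfac : (MvPolynomial.monomial β (1 : K))
                = (MvPolynomial.X t : MvPolynomial (Fin N) K)
                  * MvPolynomial.monomial (β - Finsupp.single t 1) 1 := by
              rw [← pow_one (MvPolynomial.X t : MvPolynomial (Fin N) K),
                ← monomial_single_add, hβ]
            refine ⟨(MvPolynomial.monomial (β - Finsupp.single t 1) (1:K)) • y i, ?_, ?_⟩
            · have h2 := hgendeg i (β - Finsupp.single t 1)
              have hdegeq : (γ - Pi.single t 1)
                  = (dy i + fun k => ((((β - Finsupp.single t 1) : Fin N →₀ ℕ) k : ℕ) : ℤ)) := by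
                funext k
                have hγk : γ k = dy i k + ((β k : ℕ) : ℤ) := by rw [← hEq]; rfl
                have htsub : ((β - Finsupp.single t 1) : Fin N →₀ ℕ) k
                    = β k - (Finsupp.single t 1) k := Finsupp.tsub_apply β _ k
                rcases eq_or_ne k t with rfl | hk
                · rw [Pi.sub_apply, Pi.add_apply, Pi.single_eq_same, hγk, htsub,
                    Finsupp.single_eq_same, Nat.cast_sub hβt]
                  push_cast
                  ring
                · rw [Pi.sub_apply, Pi.add_apply, Pi.single_eq_of_ne hk, hγk, htsub,
                    Finsupp.single_apply, if_neg (Ne.symm hk)]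
                  simp
              rw [hdegeq]
              exact h2
            · rw [muX_apply, ← mul_smul, ← hfac]
          · rw [DirectSum.decompose_of_mem_ne ℳ (hgendeg i β) hEq]
            exact Submodule.zero_mem _
      | zero =>
          have : (DirectSum.decompose ℳ (0:M) γ : M) = 0 := by
            rw [DirectSum.decompose_zero]; rfl
          rw [this]; exact Submodule.zero_mem _
      | add x z hx hz ihx ihz =>
          rw [DirectSum.decompose_add, DirectSum.add_apply, Submodule.coe_add]
          exact Submodule.add_mem _ ihx ihz
      | smul c x hx ih =>
          rw [DirectSum.decompose_smul, DirectSum.smul_apply, Submodule.coe_smul]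
          exact Submodule.smul_mem _ _ ih
    have := key m (aux_span K N M y hgen m)
    rw [hsame] at this
    obtain ⟨m', hm', hmm⟩ := this
    exact ⟨m', hm', hmm.symm⟩


end Stmt8Aux


section Stmt8Signs
variable {N : ℕ}

lemma sign_self_inv {M : Type} [AddCommGroup M] (n : ℕ) (x : M) :
    ((-1 : ℤ) ^ n) • ((-1 : ℤ) ^ n) • x = x := by
  rw [smul_smul, ← pow_add]
  rw [Even.neg_one_pow ⟨n, rfl⟩, one_smul]

lemma filter_insert_card (t j : Fin N) (S : Finset (Fin N)) (ht : t ∉ S) :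
    ((insert t S).filter (· < j)).card
      = (S.filter (· < j)).card + if t < j then 1 else 0 := by
  rw [Finset.filter_insert]
  split
  · rw [Finset.card_insert_of_notMem (fun h => ht (Finset.mem_of_mem_filter t h))]
  · rw [add_zero]

lemma sign_identity (t j : Fin N) (S : Finset (Fin N)) (ht : t ∉ S) (hj : j ∉ S)
    (hjt : j ≠ t) :
    ((-1 : ℤ) ^ (((insert t S).filter (· < j)).card))
      * ((-1 : ℤ) ^ (((insert j S).filter (· < t)).card))
    = -(((-1 : ℤ) ^ ((S.filter (· < t)).card))
      * ((-1 : ℤ) ^ ((S.filter (· < j)).card))) := by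
  rw [filter_insert_card t j S ht, filter_insert_card j t S hj]
  rcases lt_or_gt_of_ne hjt with h | h
  · rw [if_neg (asymm h), if_pos h]
    rw [pow_add, pow_add]
    ring
  · rw [if_pos h, if_neg (asymm h)]
    rw [pow_add, pow_add]
    ring
end Stmt8Signs


/-- Lemma 2.1. Let `M` be a torsion-free `ℤ^n`-graded module over
`R = K[x_1,…,x_N]`, minimally generated by homogeneous elements `y_1,…,y_s` whose
multidegrees are componentwise nonnegative and have `t`-th coordinate `0`. Then every
multidegree `a` with `b_{i,a}(M) ≠ 0` — equivalently (by `Tor_i(K,M)_a ≅ H_i(x;M)_a`),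
every multidegree `a` supporting a homogeneous Koszul cycle which is not a boundary —
satisfies `a t = 0`. -/
theorem stmt8 (K : Type) [Field K] (N : ℕ) (M : Type) [AddCommGroup M]
    [Module (MvPolynomial (Fin N) K) M] [Module K M]
    [IsScalarTower K (MvPolynomial (Fin N) K) M]
    (ℳ : (Fin N → ℤ) → Submodule K M) (hdecomp : DirectSum.IsInternal ℳ)
    (hgr : ∀ (α : Fin N → ℤ) (j : Fin N), ∀ x ∈ ℳ α,
      (MvPolynomial.X j : MvPolynomial (Fin N) K) • x ∈ ℳ (α + Pi.single j 1))
    (htf : ∀ (r : MvPolynomial (Fin N) K) (x : M), r • x = 0 → r = 0 ∨ x = 0)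
    (s : ℕ) (y : Fin s → M) (dy : Fin s → Fin N → ℤ) (t : Fin N)
    (hy : ∀ i, y i ∈ ℳ (dy i)) (hpos : ∀ i k, 0 ≤ dy i k) (ht : ∀ i, dy i t = 0)
    (hgen : Submodule.span (MvPolynomial (Fin N) K) (Set.range y) = ⊤)
    (hminimal : ∀ i, y i ∉ Submodule.span (MvPolynomial (Fin N) K) (y '' {i₂ | i₂ ≠ i})) :
    ∀ a : Fin N → ℤ,
      (∃ z : Finset (Fin N) → M, z ∈ ZB K N M ∧ z ∉ Bd K N M ∧
        ∀ s₂ : Finset (Fin N), z s₂ ∈ ℳ (a - fun k => if k ∈ s₂ then 1 else 0)) →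
      a t = 0 := by
  classical
  rintro a ⟨z, hz, hznb, hdeg⟩
  by_contra hat
  have hcz : ∀ (p : MvPolynomial (Fin N) K) (n : ℤ) (x : M), p • (n • x) = n • (p • x) :=
    fun p n x => (DistribMulAction.toAddMonoidHom M p).map_zsmul n x
  have kdz : ∀ s₂ : Finset (Fin N), (∑ j ∈ s₂ᶜ, ((-1 : ℤ) ^ ((s₂.filter (· < j)).card)) •
      ((MvPolynomial.X j : MvPolynomial (Fin N) K) • z (insert j s₂))) = 0 := by
    intro s₂
    have h0 : kd K N M z = 0 := LinearMap.mem_ker.1 hz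
    exact congrFun h0 s₂
  have key := aux_key K N M ℳ y hdecomp hgr dy t hy ht hgen
  rcases lt_or_gt_of_ne hat with hlt | hgt
  · -- negative t-degree : z = 0, contradiction with z ∉ Bd
    apply hznb
    have hz0 : z = 0 := by
      funext s₂
      refine (key _ _ (hdeg s₂)).1 ?_
      show a t - (if t ∈ s₂ then (1:ℤ) else 0) < 0
      split <;> omega
    rw [hz0]
    exact ⟨0, map_zero _⟩
  · -- positive t-degree : z is a boundary, contradiction
    have hdiv : ∀ s₂ : Finset (Fin N), t ∉ s₂ →
        ∃ m', z s₂ = (MvPolynomial.X t : MvPolynomial (Fin N) K) • m' := by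
      intro s₂ hs
      obtain ⟨m', _, hm'⟩ := (key _ _ (hdeg s₂)).2 (by
        show (1:ℤ) ≤ a t - (if t ∈ s₂ then (1:ℤ) else 0)
        rw [if_neg hs]; omega)
      exact ⟨m', hm'⟩
    choose u0 hu0 using hdiv
    set u : Finset (Fin N) → M := fun s₂ => if h : t ∈ s₂ then 0 else u0 s₂ h with hu
    have huz : ∀ s₂, t ∉ s₂ →
        z s₂ = (MvPolynomial.X t : MvPolynomial (Fin N) K) • u s₂ := by
      intro s₂ h
      rw [hu]; dsimp only; rw [dif_neg h]
      exact hu0 s₂ h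
    set c : Finset (Fin N) → M := fun s₂ =>
      if t ∈ s₂ then ((-1 : ℤ) ^ (((s₂.erase t).filter (· < t)).card)) • u (s₂.erase t)
      else 0 with hc
    apply hznb
    refine ⟨c, ?_⟩
    funext s₂
    show (∑ j ∈ s₂ᶜ, ((-1 : ℤ) ^ ((s₂.filter (· < j)).card)) •
      ((MvPolynomial.X j : MvPolynomial (Fin N) K) • c (insert j s₂))) = z s₂
    by_cases hts : t ∈ s₂
    · -- t ∈ s₂
      set s' := s₂.erase t with hs'
      have hts' : t ∉ s' := Finset.notMem_erase t s₂
      have hins : insert t s' = s₂ := Finset.insert_erase hts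
      -- the cycle equation at s'
      have hcyc := kdz s'
      have htc : t ∈ s'ᶜ := Finset.mem_compl.2 hts'
      rw [← Finset.add_sum_erase _ _ htc] at hcyc
      rw [hins] at hcyc
      have hterm : ∀ j ∈ s'ᶜ.erase t,
          ((-1 : ℤ) ^ ((s'.filter (· < j)).card)) •
            ((MvPolynomial.X j : MvPolynomial (Fin N) K) • z (insert j s'))
          = (MvPolynomial.X t : MvPolynomial (Fin N) K) •
            (((-1 : ℤ) ^ ((s'.filter (· < j)).card)) •
              ((MvPolynomial.X j : MvPolynomial (Fin N) K) • u (insert j s'))) := by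
        intro j hj
        obtain ⟨hjt, hjc⟩ := Finset.mem_erase.1 hj
        have hjs' : j ∉ s' := Finset.mem_compl.1 hjc
        have htnotin : t ∉ insert j s' := by
          rw [Finset.mem_insert]
          push_neg
          exact ⟨Ne.symm hjt, hts'⟩
        rw [huz _ htnotin, smul_smul, mul_comm, ← smul_smul, hcz]
      rw [Finset.sum_congr rfl hterm, ← Finset.smul_sum] at hcyc
      set Su := ∑ j ∈ s'ᶜ.erase t, ((-1 : ℤ) ^ ((s'.filter (· < j)).card)) •
        ((MvPolynomial.X j : MvPolynomial (Fin N) K) • u (insert j s')) with hSu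
      rw [show ((-1 : ℤ) ^ ((s'.filter (· < t)).card)) •
            ((MvPolynomial.X t : MvPolynomial (Fin N) K) • z s₂)
          = (MvPolynomial.X t : MvPolynomial (Fin N) K) •
            (((-1 : ℤ) ^ ((s'.filter (· < t)).card)) • z s₂) from (hcz _ _ _).symm,
        ← smul_add] at hcyc
      have hB : ((-1 : ℤ) ^ ((s'.filter (· < t)).card)) • z s₂ + Su = 0 := by
        rcases htf _ _ hcyc with h | h
        · exact absurd h (MvPolynomial.X_ne_zero t)
        · exact h
      have hzs₂ : z s₂ = -(((-1 : ℤ) ^ ((s'.filter (· < t)).card)) • Su) := by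
        have h1 : ((-1 : ℤ) ^ ((s'.filter (· < t)).card)) • z s₂ = -Su :=
          eq_neg_of_add_eq_zero_left hB
        rw [← sign_self_inv ((s'.filter (· < t)).card) (z s₂), h1, smul_neg]
      -- now compute the LHS
      rw [hzs₂]
      rw [← hins, Finset.compl_insert]
      have hstep : ∀ j ∈ s'ᶜ.erase t,
          ((-1 : ℤ) ^ (((insert t s').filter (· < j)).card)) •
            ((MvPolynomial.X j : MvPolynomial (Fin N) K) • c (insert j (insert t s')))
          = -(((-1 : ℤ) ^ ((s'.filter (· < t)).card)) •
              (((-1 : ℤ) ^ ((s'.filter (· < j)).card)) •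
                ((MvPolynomial.X j : MvPolynomial (Fin N) K) • u (insert j s')))) := by
        intro j hj
        obtain ⟨hjt, hjc⟩ := Finset.mem_erase.1 hj
        have hjs' : j ∉ s' := Finset.mem_compl.1 hjc
        have h1 : c (insert j (insert t s')) =
            ((-1 : ℤ) ^ (((insert j s').filter (· < t)).card)) • u (insert j s') := by
          rw [hc]; dsimp only
          rw [if_pos (Finset.mem_insert_of_mem (Finset.mem_insert_self t s')),
            Finset.erase_insert_of_ne hjt, Finset.erase_insert hts']
        rw [h1, hcz, smul_smul, sign_identity t j s' hts' hjs' hjt, neg_smul, ← smul_smul]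
      rw [Finset.sum_congr rfl hstep, Finset.sum_neg_distrib, ← Finset.smul_sum]
    · -- t ∉ s₂
      rw [Finset.sum_eq_single t]
      · have h1 : c (insert t s₂) =
            ((-1 : ℤ) ^ ((s₂.filter (· < t)).card)) • u s₂ := by
          rw [hc]; dsimp only
          rw [if_pos (Finset.mem_insert_self t s₂), Finset.erase_insert hts]
        rw [h1, hcz, sign_self_inv]
        exact (huz s₂ hts).symm
      · intro j hj hjt
        have : c (insert j s₂) = 0 := by
          rw [hc]; dsimp only
          rw [if_neg (by
            rw [Finset.mem_insert]
            push_neg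
            exact ⟨Ne.symm hjt, hts⟩)]
        rw [this, smul_zero, smul_zero]
      · intro h
        exact absurd (Finset.mem_compl.2 hts) h
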